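/- With the notation of the context (tangent surface of the perturbed helix α(t) = (t, t²+t⁴, t³), the maps T_s, and the averaged measure ν built from a measure μ with Fourier decay exponent β/2), there is a constant C' > 0 such that |ν̂(ρ e₃)| ≤ C' ρ^{−β/2} for all ρ > 0, where e₃ = (0,0,1). In fact one may take C' = C‖ψ‖_{L¹}. -/

import Mathlib

open MeasureTheory Real Set

/-- The Fourier transform of a measure on `ℝ^n`:  `μ̂(ξ) = ∫ e^{−2πi x·ξ} dμ(x)`. -/
noncomputable def mft {n : ℕ} (μ : Measure (EuclideanSpace ℝ (Fin n)))
    (ξ : EuclideanSpace ℝ (Fin n)) : ℂ :=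
  ∫ x, Complex.exp (((-2 * Real.pi * inner ℝ x ξ : ℝ) : ℂ) * Complex.I) ∂μ

/-- A point of `ℝ³` from three coordinates. -/
noncomputable def pt3 (x y z : ℝ) : EuclideanSpace ℝ (Fin 3) :=
  (EuclideanSpace.equiv (Fin 3) ℝ).symm ![x, y, z]

/-- The perturbed helix `α(t) = (t, t²+t⁴, t³)`. -/
noncomputable def pAlpha (t : ℝ) : EuclideanSpace ℝ (Fin 3) :=
  pt3 t (t ^ 2 + t ^ 4) (t ^ 3)

/-- The normal vector `n(s) = (−3s²(2s²−1), −3s, 6s²+1)`. -/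
noncomputable def pNormal (s : ℝ) : EuclideanSpace ℝ (Fin 3) :=
  pt3 (-3 * s ^ 2 * (2 * s ^ 2 - 1)) (-3 * s) (6 * s ^ 2 + 1)

/-- The affine map `T_s(x₁,x₂,x₃) = (x₁, x₂, x·n(s) − α(s)·n(s))`. -/
noncomputable def pT (s : ℝ) (x : EuclideanSpace ℝ (Fin 3)) : EuclideanSpace ℝ (Fin 3) :=
  pt3 (x 0) (x 1) ((inner ℝ x (pNormal s) : ℝ) - (inner ℝ (pAlpha s) (pNormal s) : ℝ))

lemma pt3_apply2 (x y z : ℝ) : (pt3 x y z) 2 = z := rfl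

lemma pt3_cont {α : Type*} [TopologicalSpace α] {f g h : α → ℝ} (hf : Continuous f)
    (hg : Continuous g) (hh : Continuous h) : Continuous fun p => pt3 (f p) (g p) (h p) := by
  unfold pt3
  refine (EuclideanSpace.equiv (Fin 3) ℝ).symm.continuous.comp ?_
  refine continuous_pi fun i => ?_
  fin_cases i <;> simpa

lemma norm_pNormal_ge (s : ℝ) : (1 : ℝ) ≤ ‖pNormal s‖ := by
  have h1 : (inner ℝ (pNormal s) (EuclideanSpace.single (2 : Fin 3) (1:ℝ)) : ℝ) = 6 * s ^ 2 + 1 := by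
    rw [EuclideanSpace.inner_single_right]
    simp [pNormal, pt3_apply2]
  have h2 := abs_real_inner_le_norm (pNormal s) (EuclideanSpace.single (2 : Fin 3) (1:ℝ))
  rw [h1, EuclideanSpace.norm_single] at h2
  simp at h2
  calc (1:ℝ) ≤ |6 * s ^ 2 + 1| := by rw [abs_of_nonneg (by positivity)]; nlinarith [sq_nonneg s]
    _ ≤ ‖pNormal s‖ := by simpa using h2


/-- Upper Fourier decay of the averaged measure `ν` on the tangent surface of the
perturbed helix `α(t) = (t, t²+t⁴, t³)`: `|ν̂(ρe₃)| ≤ C‖ψ‖_{L¹} ρ^{−β/2}` for all `ρ > 0`. -/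
theorem statement7 (a b c : ℝ) (ha : 0 < a) (hab : a < b) (hc : 0 < c)
    (Φ : ℝ → ℝ → EuclideanSpace ℝ (Fin 3))
    (hΦ : ∀ t v, Φ t v =
      pt3 (t + v) (t ^ 2 + t ^ 4 + v * (2 * t + 4 * t ^ 3)) (t ^ 3 + v * (3 * t ^ 2)))
    (lam : Measure (ℝ × ℝ)) (hlamfin : IsFiniteMeasure lam) (hlamne : lam ≠ 0)
    (hlamsupp : lam ((Set.Icc (-(2 * c)) (2 * c) ×ˢ Set.Icc a b)ᶜ) = 0)
    (C β : ℝ) (hC : 0 < C) (hβ : 0 < β)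
    (hdecay : ∀ ξ : EuclideanSpace ℝ (Fin 3), ξ ≠ 0 →
      ‖mft (lam.map fun p : ℝ × ℝ => Φ p.1 p.2) ξ‖ ≤ C * ‖ξ‖ ^ (-(β / 2)))
    (ψ : ℝ → ℝ) (hψsm : ContDiff ℝ (⊤ : ℕ∞) ψ) (hψcs : HasCompactSupport ψ)
    (hψnn : ∀ s, 0 ≤ ψ s) (hψ1 : ∀ s : ℝ, |s| ≤ c → ψ s = 1)
    (hψ0 : ∀ s : ℝ, 2 * c ≤ |s| → ψ s = 0)
    (ν : Measure (EuclideanSpace ℝ (Fin 3))) (hνfin : IsFiniteMeasure ν)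
    (hν : ∀ f : EuclideanSpace ℝ (Fin 3) → ℂ, Measurable f →
      (∃ B : ℝ, ∀ x, ‖f x‖ ≤ B) →
      ∫ x, f x ∂ν = ∫ s : ℝ, (∫ p : ℝ × ℝ, f (pT s (Φ p.1 p.2)) ∂lam) * ((ψ s : ℝ) : ℂ)) :
    ∀ ρ : ℝ, 0 < ρ →
      ‖mft ν (ρ • (EuclideanSpace.single (2 : Fin 3) 1))‖
        ≤ (C * ∫ s : ℝ, ψ s) * ρ ^ (-(β / 2)) := by
  intro ρ hρ
  set ξ : EuclideanSpace ℝ (Fin 3) := ρ • EuclideanSpace.single (2 : Fin 3) 1 with hξdef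
  set f : EuclideanSpace ℝ (Fin 3) → ℂ :=
    fun x => Complex.exp (((-2 * Real.pi * inner ℝ x ξ : ℝ) : ℂ) * Complex.I) with hfdef
  have hfc : Continuous f := by
    refine Complex.continuous_exp.comp ?_
    exact (Complex.continuous_ofReal.comp
      ((continuous_const.mul (continuous_id.inner continuous_const)))).mul continuous_const
  have hfb : ∀ x, ‖f x‖ = 1 := fun x => Complex.norm_exp_ofReal_mul_I _
  have key : mft ν ξ = ∫ s : ℝ, (∫ p : ℝ × ℝ, f (pT s (Φ p.1 p.2)) ∂lam) * ((ψ s : ℝ) : ℂ) :=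
    hν f hfc.measurable ⟨1, fun x => (hfb x).le⟩
  -- measurability of the parametrization
  have hΦc : Continuous fun p : ℝ × ℝ => Φ p.1 p.2 := by
    have : (fun p : ℝ × ℝ => Φ p.1 p.2) = fun p : ℝ × ℝ =>
        pt3 (p.1 + p.2) (p.1 ^ 2 + p.1 ^ 4 + p.2 * (2 * p.1 + 4 * p.1 ^ 3))
          (p.1 ^ 3 + p.2 * (3 * p.1 ^ 2)) := by
      funext p; exact hΦ p.1 p.2
    rw [this]
    exact pt3_cont (by fun_prop) (by fun_prop) (by fun_prop)
  -- key pointwise identity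
  have hcoord : ∀ (s : ℝ) (x : EuclideanSpace ℝ (Fin 3)),
      (inner ℝ (pT s x) ξ : ℝ) = ρ * ((inner ℝ x (pNormal s) : ℝ) - (inner ℝ (pAlpha s) (pNormal s) : ℝ)) := by
    intro s x
    rw [hξdef, real_inner_smul_right, EuclideanSpace.inner_single_right]
    simp [pT, pt3_apply2]
  have inner_bound : ∀ s : ℝ,
      ‖∫ p : ℝ × ℝ, f (pT s (Φ p.1 p.2)) ∂lam‖ ≤ C * ρ ^ (-(β / 2)) := by
    intro s
    have h1 : ∀ x : EuclideanSpace ℝ (Fin 3),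
        f (pT s x) =
          Complex.exp (((2 * Real.pi * (ρ * (inner ℝ (pAlpha s) (pNormal s) : ℝ)) : ℝ) : ℂ) * Complex.I)
            * Complex.exp (((-2 * Real.pi * (inner ℝ x (ρ • pNormal s) : ℝ) : ℝ) : ℂ) * Complex.I) := by
      intro x
      rw [hfdef]
      simp only []
      rw [← Complex.exp_add, hcoord s x, real_inner_smul_right]
      congr 1
      push_cast
      ring
    have h2 : (∫ p : ℝ × ℝ, f (pT s (Φ p.1 p.2)) ∂lam)
        = Complex.exp (((2 * Real.pi * (ρ * (inner ℝ (pAlpha s) (pNormal s) : ℝ)) : ℝ) : ℂ) * Complex.I)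
          * mft (lam.map fun p : ℝ × ℝ => Φ p.1 p.2) (ρ • pNormal s) := by
      simp_rw [h1]
      rw [integral_const_mul]
      congr 1
      rw [mft, integral_map hΦc.measurable.aemeasurable]
      exact (Continuous.aestronglyMeasurable (by
        refine Complex.continuous_exp.comp ?_
        exact (Complex.continuous_ofReal.comp
          ((continuous_const.mul (continuous_id.inner continuous_const)))).mul continuous_const))
    have hne : (ρ • pNormal s : EuclideanSpace ℝ (Fin 3)) ≠ 0 := by
      have : ‖ρ • pNormal s‖ ≠ 0 := by
        rw [norm_smul, Real.norm_eq_abs, abs_of_pos hρ]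
        have := norm_pNormal_ge s
        positivity
      simpa [norm_eq_zero] using this
    have hnorm : ρ ≤ ‖(ρ • pNormal s : EuclideanSpace ℝ (Fin 3))‖ := by
      rw [norm_smul, Real.norm_eq_abs, abs_of_pos hρ]
      nlinarith [norm_pNormal_ge s]
    have := hdecay (ρ • pNormal s) hne
    rw [h2, norm_mul, Complex.norm_exp_ofReal_mul_I, one_mul]
    refine this.trans ?_
    have hmono : ‖(ρ • pNormal s : EuclideanSpace ℝ (Fin 3))‖ ^ (-(β / 2)) ≤ ρ ^ (-(β / 2)) :=
      Real.rpow_le_rpow_of_nonpos hρ hnorm (by linarith)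
    nlinarith [hmono, hC.le]
  -- assemble
  have hψc : Continuous ψ := hψsm.continuous
  have hint : Integrable (fun s : ℝ => C * ρ ^ (-(β / 2)) * ψ s) := by
    exact (hψc.integrable_of_hasCompactSupport hψcs).const_mul _
  rw [key]
  calc ‖∫ s : ℝ, (∫ p : ℝ × ℝ, f (pT s (Φ p.1 p.2)) ∂lam) * ((ψ s : ℝ) : ℂ)‖
      ≤ ∫ s : ℝ, ‖(∫ p : ℝ × ℝ, f (pT s (Φ p.1 p.2)) ∂lam) * ((ψ s : ℝ) : ℂ)‖ := by
        exact norm_integral_le_integral_norm _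
    _ ≤ ∫ s : ℝ, C * ρ ^ (-(β / 2)) * ψ s := by
        refine integral_mono_of_nonneg (Filter.Eventually.of_forall fun s => norm_nonneg _)
          hint (Filter.Eventually.of_forall fun s => ?_)
        dsimp only
        rw [norm_mul, Complex.norm_real, Real.norm_eq_abs, abs_of_nonneg (hψnn s)]
        have := inner_bound s
        exact mul_le_mul_of_nonneg_right this (hψnn s)
    _ = (C * ∫ s : ℝ, ψ s) * ρ ^ (-(β / 2)) := by
        rw [integral_const_mul]; ring
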